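/- A subset C of an abelian group G is a maximal supplement for W ⊆ G (i.e., C is a supplement for W and no proper superset of C is a supplement for W) if and only if (C − C) ∩ (W − W) = {0} and C + (W − W) = G. -/

import Mathlib

open Pointwise

/-- `C` is a supplement for `W`: every element has at most one representation `w + c`. -/
def IsSupplement {G : Type*} [AddCommGroup G] (W C : Set G) : Prop :=
  ∀ w₁ ∈ W, ∀ c₁ ∈ C, ∀ w₂ ∈ W, ∀ c₂ ∈ C, w₁ + c₁ = w₂ + c₂ → w₁ = w₂ ∧ c₁ = c₂

/-- `C` is a maximal supplement for a nonempty `W` iff `(C−C) ∩ (W−W) = {0}` and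
`C + (W − W) = G`. -/
theorem maximal_supplement_iff {G : Type*} [AddCommGroup G] (W C : Set G)
    (hW : W.Nonempty) :
    (IsSupplement W C ∧ ∀ D : Set G, C ⊂ D → ¬ IsSupplement W D) ↔
      ((C - C) ∩ (W - W) = {0} ∧ C + (W - W) = Set.univ) := by
  obtain ⟨w₀, hw₀⟩ := hW
  have h0WW : (0 : G) ∈ W - W := ⟨w₀, hw₀, w₀, hw₀, sub_self w₀⟩
  constructor
  · rintro ⟨hsupp, hmax⟩
    have hcov : C + (W - W) = Set.univ := by
      ext g
      simp only [Set.mem_univ, iff_true]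
      by_contra hg
      have hgC : g ∉ C := fun h => hg ⟨g, h, 0, h0WW, add_zero g⟩
      refine hmax (C ∪ {g}) ⟨Set.subset_union_left, fun hsub => hgC (hsub (by simp))⟩ ?_
      intro w₁ hw₁ c₁ hc₁ w₂ hw₂ c₂ hc₂ heq
      rcases hc₁ with hc₁ | hc₁ <;> rcases hc₂ with hc₂ | hc₂
      · exact hsupp w₁ hw₁ c₁ hc₁ w₂ hw₂ c₂ hc₂ heq
      · simp only [Set.mem_singleton_iff] at hc₂; subst hc₂
        refine absurd ⟨c₁, hc₁, w₁ - w₂, ⟨w₁, hw₁, w₂, hw₂, rfl⟩, ?_⟩ hg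
        show c₁ + (w₁ - w₂) = c₂
        rw [add_sub, sub_eq_iff_eq_add, add_comm c₂ w₂, ← heq, add_comm]
      · simp only [Set.mem_singleton_iff] at hc₁; subst hc₁
        refine absurd ⟨c₂, hc₂, w₂ - w₁, ⟨w₂, hw₂, w₁, hw₁, rfl⟩, ?_⟩ hg
        show c₂ + (w₂ - w₁) = c₁
        rw [add_sub, sub_eq_iff_eq_add, add_comm c₁ w₁, heq, add_comm]
      · simp only [Set.mem_singleton_iff] at hc₁ hc₂; subst hc₁; subst hc₂
        exact ⟨add_right_cancel heq, rfl⟩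
    refine ⟨?_, hcov⟩
    have hCne : C.Nonempty := by
      have : (w₀ : G) ∈ C + (W - W) := hcov ▸ Set.mem_univ w₀
      obtain ⟨c, hc, -⟩ := this
      exact ⟨c, hc⟩
    apply Set.eq_singleton_iff_unique_mem.mpr
    constructor
    · obtain ⟨c, hc⟩ := hCne
      exact ⟨⟨c, hc, c, hc, sub_self c⟩, h0WW⟩
    · rintro x ⟨⟨c₁, hc₁, c₂, hc₂, hx⟩, w₂, hw₂, w₁, hw₁, hx'⟩
      have : w₁ + c₁ = w₂ + c₂ := by
        have h : c₁ - c₂ = w₂ - w₁ := hx.trans hx'.symm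
        rw [sub_eq_sub_iff_add_eq_add] at h
        rw [add_comm]; exact h
      obtain ⟨h1, h2⟩ := hsupp w₁ hw₁ c₁ hc₁ w₂ hw₂ c₂ hc₂ this
      rw [← hx]; show c₁ - c₂ = 0; rw [h2, sub_self]
  · rintro ⟨hint, hcov⟩
    have hsupp : IsSupplement W C := by
      intro w₁ hw₁ c₁ hc₁ w₂ hw₂ c₂ hc₂ heq
      have hmem : c₁ - c₂ ∈ (C - C) ∩ (W - W) :=
        ⟨⟨c₁, hc₁, c₂, hc₂, rfl⟩, ⟨w₂, hw₂, w₁, hw₁, by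
          show w₂ - w₁ = c₁ - c₂
          rw [sub_eq_sub_iff_add_eq_add, ← heq, add_comm]⟩⟩
      rw [hint, Set.mem_singleton_iff, sub_eq_zero] at hmem
      subst hmem
      exact ⟨add_right_cancel heq, rfl⟩
    refine ⟨hsupp, ?_⟩
    intro D hD hDsupp
    obtain ⟨g, hgD, hgC⟩ := Set.exists_of_ssubset hD
    have : g ∈ C + (W - W) := hcov ▸ Set.mem_univ g
    obtain ⟨c, hc, x, ⟨w₂, hw₂, w₁, hw₁, hx⟩, hg⟩ := this
    have heq : w₁ + g = w₂ + c := by rw [← hg, ← hx]; show w₁ + (c + (w₂ - w₁)) = w₂ + c; abel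
    obtain ⟨-, h2⟩ := hDsupp w₁ hw₁ g hgD w₂ hw₂ c (hD.subset hc) heq
    exact hgC (h2 ▸ hc)
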